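/- Let g_{n,n'} be a family of histograms, defined for n' ≥ 1 and 0 ≤ n ≤ n', satisfying the recursion g_{n,n'} = g_{n−1,n'−1} + dm(g_{min(n,n'−1),n'−1}) for all 2 ≤ n ≤ n', and whose initial values satisfy ‖g_{0,n'}‖₁ = 1 and ‖g_{1,n'}‖₁ = n'+1 for all n' ≥ 1, where ‖v‖₁ = Σ_j v(j). Then for every n' ≥ 1 and 0 ≤ n ≤ n', ‖g_{n,n'}‖₁ = Σ_{s=0}^{n} binomial(n', s). -/

import Mathlib

open scoped Classical

noncomputable section

/-- Tail sum `Σ_{j ≥ J} v j` of a finitely supported histogram `v : ℕ →₀ ℕ`. -/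
def tailSum (v : ℕ →₀ ℕ) (J : ℕ) : ℕ :=
  ∑ j ∈ v.support.filter (fun j => J ≤ j), v j

/-- Order relation on histograms: `v ≼ w` iff every tail sum of `v` is at most that of `w`. -/
def HistLE (v w : ℕ →₀ ℕ) : Prop :=
  ∀ J : ℕ, tailSum v J ≤ tailSum w J

/-- Downward move: `dm v 0 = 0` and `dm v (i+1) = v i`. -/
def dm (v : ℕ →₀ ℕ) : ℕ →₀ ℕ :=
  Finsupp.embDomain ⟨Nat.succ, Nat.succ_injective⟩ v

/-- Clipping `cl_k`: keeps values below `k`, puts the tail sum at `k`, zero above `k`. -/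
def clip (k : ℕ) (v : ℕ →₀ ℕ) : ℕ →₀ ℕ :=
  Finsupp.onFinset (Finset.range (k + 1))
    (fun i => if i < k then v i else if i = k then tailSum v k else 0)
    (by
      intro a ha
      simp only [Finset.mem_range]
      by_contra hc
      push_neg at hc
      have h1 : ¬ a < k := by omega
      have h2 : a ≠ k := by omega
      simp [h1, h2] at ha)

/-- `ℓ₁`-norm (sum of entries) of a histogram. -/
def l1 (v : ℕ →₀ ℕ) : ℕ := ∑ j ∈ v.support, v j

/-- Lemma 1: if a family of histograms satisfies the recursion
`g_{n,n'} = g_{n-1,n'-1} + dm(g_{min(n,n'-1),n'-1})` with `‖g_{0,n'}‖₁ = 1` and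
`‖g_{1,n'}‖₁ = n'+1`, then `‖g_{n,n'}‖₁ = Σ_{s=0}^n binomial(n', s)`. -/
theorem statement11 (g : ℕ → ℕ → (ℕ →₀ ℕ))
    (hrec : ∀ n' n : ℕ, 2 ≤ n → n ≤ n' →
      g n n' = g (n - 1) (n' - 1) + dm (g (min n (n' - 1)) (n' - 1)))
    (h0 : ∀ n' : ℕ, 1 ≤ n' → l1 (g 0 n') = 1)
    (h1 : ∀ n' : ℕ, 1 ≤ n' → l1 (g 1 n') = n' + 1) :
    ∀ n' : ℕ, 1 ≤ n' → ∀ n : ℕ, n ≤ n' →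
      l1 (g n n') = ∑ s ∈ Finset.range (n + 1), Nat.choose n' s := by
  have l1_add : ∀ v w : ℕ →₀ ℕ, l1 (v + w) = l1 v + l1 w := by
    intro v w
    have hl : ∀ u : ℕ →₀ ℕ, l1 u = u.sum (fun _ x => x) := fun _ => rfl
    rw [hl, hl, hl]
    exact Finsupp.sum_add_index' (fun _ => rfl) (fun _ _ _ => rfl)
  have l1_dm : ∀ v : ℕ →₀ ℕ, l1 (dm v) = l1 v := by
    intro v
    simp only [l1, dm, Finsupp.support_embDomain, Finset.sum_map]
    exact Finset.sum_congr rfl fun i _ => Finsupp.embDomain_apply_self _ _ _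
  intro n'
  induction n' with
  | zero => omega
  | succ m ih =>
    intro _ n hn
    match n, hn with
    | 0, _ => simpa using h0 (m + 1) (by omega)
    | 1, _ =>
      have := h1 (m + 1) (by omega)
      simp only [Finset.sum_range_succ, Finset.sum_range_zero, Nat.choose_zero_right,
        Nat.choose_one_right]
      omega
    | (k + 2), hn =>
      have hm1 : 1 ≤ m := by omega
      rw [hrec (m + 1) (k + 2) (by omega) hn]
      simp only [Nat.add_sub_cancel, l1_add, l1_dm, show k + 2 - 1 = k + 1 from rfl]
      rcases Nat.lt_or_ge (k + 2) (m + 1) with h | h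
      · rw [min_eq_left (by omega), ih hm1 (k + 1) (by omega),
          ih hm1 (k + 2) (by omega)]
        have : ∀ N : ℕ, (∑ s ∈ Finset.range (N + 1), Nat.choose m s) +
            ∑ s ∈ Finset.range (N + 2), Nat.choose m s =
            ∑ s ∈ Finset.range (N + 2), Nat.choose (m + 1) s := by
          intro N
          induction N with
          | zero => simp [Finset.sum_range_succ]; omega
          | succ p ihp =>
            show ∑ s ∈ Finset.range (p + 2), Nat.choose m s +
                ∑ s ∈ Finset.range (p + 3), Nat.choose m s =
                ∑ s ∈ Finset.range (p + 3), Nat.choose (m + 1) s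
            have hB : ∑ s ∈ Finset.range (p + 2), Nat.choose m s
                = ∑ s ∈ Finset.range (p + 1), Nat.choose m s + Nat.choose m (p + 1) :=
              Finset.sum_range_succ _ _
            have hB3 : ∑ s ∈ Finset.range (p + 3), Nat.choose m s
                = ∑ s ∈ Finset.range (p + 2), Nat.choose m s + Nat.choose m (p + 2) :=
              Finset.sum_range_succ _ _
            have hC : ∑ s ∈ Finset.range (p + 3), Nat.choose (m + 1) s
                = ∑ s ∈ Finset.range (p + 2), Nat.choose (m + 1) s
                  + Nat.choose (m + 1) (p + 2) :=
              Finset.sum_range_succ _ _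
            have hc : Nat.choose (m + 1) (p + 2) =
                Nat.choose m (p + 1) + Nat.choose m (p + 2) :=
              Nat.choose_succ_succ' m (p + 1)
            have ihp' : ∑ s ∈ Finset.range (p + 1), Nat.choose m s +
                ∑ s ∈ Finset.range (p + 2), Nat.choose m s =
                ∑ s ∈ Finset.range (p + 2), Nat.choose (m + 1) s := ihp
            omega
        exact this (k + 1)
      · have hk : k + 2 = m + 1 := by omega
        rw [min_eq_right (by omega)]
        have hkm : k + 1 = m := by omega
        rw [hkm, ih hm1 m le_rfl]
        have h2 : ∑ s ∈ Finset.range (m + 1), Nat.choose m s = 2 ^ m :=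
          Nat.sum_range_choose m
        have h3 : ∑ s ∈ Finset.range (m + 2), Nat.choose (m + 1) s = 2 ^ (m + 1) :=
          Nat.sum_range_choose (m + 1)
        rw [show k + 2 + 1 = m + 2 by omega, h2, h3]
        ring
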